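/- For every real α with 0 ≤ α ≤ 1 and every real x with 0 < x and (2+x)·ln(2+x) − x·ln x ≤ 2, one has (2+x)^α − x^α ≥ 2α. -/

import Mathlib

open Real

lemma stmt_0_aux (u v : ℝ) (huv : v ≤ u)
    (h1 : Real.exp u - Real.exp v = 2)
    (h2 : u * Real.exp u - v * Real.exp v ≤ 2)
    (α : ℝ) (hα0 : 0 < α) (hα1 : α ≤ 1) :
    Real.exp (α * u) - Real.exp (α * v) ≥ 2 * α := by
  set H : ℝ → ℝ := fun t =>
    t * (u * Real.exp (t * u) - v * Real.exp (t * v)) -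
      (Real.exp (t * u) - Real.exp (t * v)) with hHdef
  have hexp : ∀ (w t : ℝ), HasDerivAt (fun s : ℝ => Real.exp (s * w))
      (w * Real.exp (t * w)) t := by
    intro w t
    have := ((hasDerivAt_id t).mul_const w).exp
    simpa [mul_comm] using this
  have hH' : ∀ t : ℝ, HasDerivAt H
      (t * (u ^ 2 * Real.exp (t * u) - v ^ 2 * Real.exp (t * v))) t := by
    intro t
    have ha : HasDerivAt (fun s : ℝ => s * (u * Real.exp (s * u) - v * Real.exp (s * v)))
        (1 * (u * Real.exp (t * u) - v * Real.exp (t * v)) +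
          t * (u * (u * Real.exp (t * u)) - v * (v * Real.exp (t * v)))) t :=
      (hasDerivAt_id t).mul (((hexp u t).const_mul u).sub ((hexp v t).const_mul v))
    have hb := ha.sub ((hexp u t).sub (hexp v t))
    exact hb.congr_deriv (by ring)
  -- monotone comparison facts
  have key1 : ∀ s t : ℝ, s ≤ t →
      u ^ 2 * Real.exp (t * u) - v ^ 2 * Real.exp (t * v) ≤ 0 →
      u ^ 2 * Real.exp (s * u) - v ^ 2 * Real.exp (s * v) ≤ 0 := by
    intro s t hst ht
    rw [sub_nonpos] at ht ⊢
    have e1 : Real.exp (t * u) = Real.exp (t * (u - v)) * Real.exp (t * v) := by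
      rw [← Real.exp_add]; ring_nf
    rw [e1, ← mul_assoc] at ht
    have h3 : u ^ 2 * Real.exp (t * (u - v)) ≤ v ^ 2 :=
      le_of_mul_le_mul_right ht (Real.exp_pos _)
    have h4 : u ^ 2 * Real.exp (s * (u - v)) ≤ u ^ 2 * Real.exp (t * (u - v)) := by
      have : s * (u - v) ≤ t * (u - v) :=
        mul_le_mul_of_nonneg_right hst (by linarith)
      exact mul_le_mul_of_nonneg_left (Real.exp_le_exp.mpr this) (sq_nonneg u)
    have e2 : Real.exp (s * u) = Real.exp (s * (u - v)) * Real.exp (s * v) := by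
      rw [← Real.exp_add]; ring_nf
    rw [e2, ← mul_assoc]
    exact mul_le_mul_of_nonneg_right (le_trans h4 h3) (Real.exp_pos _).le
  have key2 : ∀ s t : ℝ, t ≤ s →
      0 ≤ u ^ 2 * Real.exp (t * u) - v ^ 2 * Real.exp (t * v) →
      0 ≤ u ^ 2 * Real.exp (s * u) - v ^ 2 * Real.exp (s * v) := by
    intro s t hst ht
    rw [sub_nonneg] at ht ⊢
    have e1 : Real.exp (t * u) = Real.exp (t * (u - v)) * Real.exp (t * v) := by
      rw [← Real.exp_add]; ring_nf
    rw [e1, ← mul_assoc] at ht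
    have h3 : v ^ 2 ≤ u ^ 2 * Real.exp (t * (u - v)) :=
      le_of_mul_le_mul_right ht (Real.exp_pos _)
    have h4 : u ^ 2 * Real.exp (t * (u - v)) ≤ u ^ 2 * Real.exp (s * (u - v)) := by
      have : t * (u - v) ≤ s * (u - v) :=
        mul_le_mul_of_nonneg_right hst (by linarith)
      exact mul_le_mul_of_nonneg_left (Real.exp_le_exp.mpr this) (sq_nonneg u)
    have e2 : Real.exp (s * u) = Real.exp (s * (u - v)) * Real.exp (s * v) := by
      rw [← Real.exp_add]; ring_nf
    rw [e2, ← mul_assoc]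
    exact mul_le_mul_of_nonneg_right (le_trans h3 h4) (Real.exp_pos _).le
  have hHdiff : Differentiable ℝ H := fun t => (hH' t).differentiableAt
  have hH0 : H 0 = 0 := by simp [hHdef]
  have hH1 : H 1 ≤ 0 := by
    simp only [hHdef, one_mul]
    linarith
  have hHle : ∀ t ∈ Set.Icc (0 : ℝ) 1, H t ≤ 0 := by
    rintro t ⟨ht0, ht1⟩
    by_cases hc : u ^ 2 * Real.exp (t * u) - v ^ 2 * Real.exp (t * v) ≤ 0
    · -- H antitone on [0, t]
      have hmono : AntitoneOn H (Set.Icc 0 t) := by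
        apply antitoneOn_of_deriv_nonpos (convex_Icc 0 t) hHdiff.continuous.continuousOn
          (fun s _ => (hHdiff s).differentiableWithinAt)
        intro s hs
        rw [interior_Icc, Set.mem_Ioo] at hs
        rw [(hH' s).deriv]
        exact mul_nonpos_of_nonneg_of_nonpos hs.1.le (key1 s t hs.2.le hc)
      have := hmono (Set.left_mem_Icc.mpr ht0) (Set.right_mem_Icc.mpr ht0) ht0
      linarith [hH0]
    · push_neg at hc
      have hmono : MonotoneOn H (Set.Icc t 1) := by
        apply monotoneOn_of_deriv_nonneg (convex_Icc t 1) hHdiff.continuous.continuousOn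
          (fun s _ => (hHdiff s).differentiableWithinAt)
        intro s hs
        rw [interior_Icc, Set.mem_Ioo] at hs
        rw [(hH' s).deriv]
        exact mul_nonneg (le_trans ht0 hs.1.le) (key2 s t hs.1.le hc.le)
      have := hmono (Set.left_mem_Icc.mpr ht1) (Set.right_mem_Icc.mpr ht1) ht1
      linarith
  -- now the quotient function L t = K t / t is antitone on [α, 1]
  set K : ℝ → ℝ := fun t => Real.exp (t * u) - Real.exp (t * v) - 2 * t with hKdef
  have hK' : ∀ t : ℝ, HasDerivAt K (u * Real.exp (t * u) - v * Real.exp (t * v) - 2) t := by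
    intro t
    have := ((hexp u t).sub (hexp v t)).sub ((hasDerivAt_id t).const_mul 2)
    exact this.congr_deriv (by simp)
  set L : ℝ → ℝ := fun t => K t / t with hLdef
  have hL' : ∀ t : ℝ, t ≠ 0 → HasDerivAt L
      (((u * Real.exp (t * u) - v * Real.exp (t * v) - 2) * t - K t * 1) / t ^ 2) t := by
    intro t ht
    exact (hK' t).div (hasDerivAt_id t) ht
  have hLanti : AntitoneOn L (Set.Icc α 1) := by
    apply antitoneOn_of_deriv_nonpos (convex_Icc α 1)
    · intro t ht
      have htpos : 0 < t := lt_of_lt_of_le hα0 ht.1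
      exact ((hL' t htpos.ne').differentiableAt).continuousAt.continuousWithinAt
    · intro t ht
      rw [interior_Icc] at ht
      have htpos : 0 < t := lt_trans hα0 ht.1
      exact ((hL' t htpos.ne').differentiableAt).differentiableWithinAt
    · intro t ht
      rw [interior_Icc, Set.mem_Ioo] at ht
      have htpos : 0 < t := lt_trans hα0 ht.1
      rw [(hL' t htpos.ne').deriv]
      have hHt : H t ≤ 0 := hHle t ⟨htpos.le, ht.2.le⟩
      have hnum : (u * Real.exp (t * u) - v * Real.exp (t * v) - 2) * t - K t * 1 = H t := by
        simp only [hKdef, hHdef]; ring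
      rw [hnum]
      exact div_nonpos_of_nonpos_of_nonneg hHt (sq_nonneg t)
  have hL1 : L 1 = 0 := by
    simp only [hLdef, hKdef]
    simp
    linarith
  have hLα : 0 ≤ L α := by
    have := hLanti (Set.left_mem_Icc.mpr hα1) (Set.right_mem_Icc.mpr hα1) hα1
    linarith
  have h9 : 0 ≤ K α := by
    have := mul_nonneg hLα hα0.le
    rwa [hLdef, div_mul_cancel₀ _ hα0.ne'] at this
  simp only [hKdef] at h9
  linarith

/-- Lemma 9 of the paper: for `0 ≤ α ≤ 1` and `0 < x` with
`(2+x)·ln(2+x) − x·ln x ≤ 2`, one has `(2+x)^α − x^α ≥ 2α`. -/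
theorem stmt_0 (α x : ℝ) (hα0 : 0 ≤ α) (hα1 : α ≤ 1) (hx : 0 < x)
    (h : (2 + x) * Real.log (2 + x) - x * Real.log x ≤ 2) :
    (2 + x) ^ α - x ^ α ≥ 2 * α := by
  rcases eq_or_lt_of_le hα0 with h0 | h0
  · rw [← h0]; simp
  have hx2 : (0 : ℝ) < 2 + x := by linarith
  have h1 : Real.exp (Real.log (2 + x)) - Real.exp (Real.log x) = 2 := by
    rw [Real.exp_log hx2, Real.exp_log hx]; ring
  have h2 : Real.log (2 + x) * Real.exp (Real.log (2 + x)) -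
      Real.log x * Real.exp (Real.log x) ≤ 2 := by
    rw [Real.exp_log hx2, Real.exp_log hx]
    linarith [h]
  have huv : Real.log x ≤ Real.log (2 + x) :=
    Real.log_le_log hx (by linarith)
  have := stmt_0_aux _ _ huv h1 h2 α h0 hα1
  rw [Real.rpow_def_of_pos hx2, Real.rpow_def_of_pos hx]
  simpa [mul_comm] using this
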